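/- Let V, Q be real Hilbert spaces, a: V×V → ℝ continuous and coercive, b: V×Q → ℝ continuous and satisfying the inf-sup condition sup_{v≠0} b(v,q)/‖v‖ ≥ β‖q‖ for all q ∈ Q with β > 0. Then for every f ∈ V* the saddle point problem a(u,v) + b(v,p) = f(v) for all v ∈ V and b(u,q) = 0 for all q ∈ Q has a unique solution (u,p) ∈ V × Q, and ‖u‖ + ‖p‖ ≤ C ‖f‖_{V*} with C depending only on the continuity, coercivity and inf-sup constants. -/

import Mathlib

open Real
open RealInnerProductSpace

/-- Abstract saddle-point (Brezzi) theory: if `a` is continuous and coercive and `b` is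
continuous and satisfies the inf-sup condition with constant `β > 0`, then for every
`f ∈ V*` the saddle point problem has a unique solution `(u,p)`, and
`‖u‖ + ‖p‖ ≤ C ‖f‖` with `C` depending only on the constants. -/
theorem brezzi_saddle_point {V Q : Type*}
    [NormedAddCommGroup V] [InnerProductSpace ℝ V] [CompleteSpace V]
    [NormedAddCommGroup Q] [InnerProductSpace ℝ Q] [CompleteSpace Q]
    (a : V →ₗ[ℝ] V →ₗ[ℝ] ℝ) (b : V →ₗ[ℝ] Q →ₗ[ℝ] ℝ)
    (M α Mb β : ℝ) (hM : 0 < M) (hα : 0 < α) (hMb : 0 < Mb) (hβ : 0 < β)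
    (hconta : ∀ u v, |a u v| ≤ M * ‖u‖ * ‖v‖)
    (hcoer : ∀ v, α * ‖v‖ ^ 2 ≤ a v v)
    (hcontb : ∀ v q, |b v q| ≤ Mb * ‖v‖ * ‖q‖)
    (hinfsup : ∀ q : Q, β * ‖q‖ ≤ ⨆ v : V, b v q / ‖v‖) :
    ∃ C : ℝ, 0 < C ∧ ∀ f : V →L[ℝ] ℝ,
      (∃! up : V × Q, (∀ v, a up.1 v + b v up.2 = f v) ∧ (∀ q, b up.1 q = 0)) ∧
      (∀ up : V × Q, ((∀ v, a up.1 v + b v up.2 = f v) ∧ (∀ q, b up.1 q = 0)) →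
        ‖up.1‖ + ‖up.2‖ ≤ C * ‖f‖) := by
  set C : ℝ := 1 / α + (1 + M / α) / β with hC
  have hCpos : 0 < C := by positivity
  -- a priori bound
  have key : ∀ (f : V →L[ℝ] ℝ) (up : V × Q),
      ((∀ v, a up.1 v + b v up.2 = f v) ∧ (∀ q, b up.1 q = 0)) →
      ‖up.1‖ + ‖up.2‖ ≤ C * ‖f‖ := by
    rintro f ⟨u, p⟩ ⟨h1, h2⟩
    have hfu : f u ≤ ‖f‖ * ‖u‖ := by
      have := f.le_opNorm u
      rw [Real.norm_eq_abs] at this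
      exact (le_abs_self _).trans this
    have hq : α * ‖u‖ ^ 2 ≤ ‖f‖ * ‖u‖ := by
      have h3 := h1 u
      have h4 := h2 p
      have := hcoer u
      nlinarith
    have hu3 : α * ‖u‖ ≤ ‖f‖ := by
      rcases (norm_nonneg u).eq_or_lt' with h0 | h0
      · rw [h0, mul_zero]; exact norm_nonneg f
      · exact le_of_mul_le_mul_right (by nlinarith) h0
    have hpb : β * ‖p‖ ≤ ‖f‖ + M * ‖u‖ := by
      refine (hinfsup p).trans (ciSup_le fun v => ?_)
      rcases eq_or_ne v 0 with rfl | hv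
      · simp
        positivity
      · rw [div_le_iff₀ (norm_pos_iff.mpr hv)]
        have hbv : b v p = f v - a u v := by linarith [h1 v]
        have hfv : f v ≤ ‖f‖ * ‖v‖ := by
          have := f.le_opNorm v
          rw [Real.norm_eq_abs] at this
          exact (le_abs_self _).trans this
        have hav : -(a u v) ≤ M * ‖u‖ * ‖v‖ := (neg_le_abs _).trans (hconta u v)
        nlinarith
    have h1' : ‖u‖ ≤ (1 / α) * ‖f‖ := by
      rw [one_div, inv_mul_eq_div, le_div_iff₀ hα]; linarith
    have h2' : ‖p‖ ≤ (1 / β) * (‖f‖ + M * ‖u‖) := by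
      rw [one_div, inv_mul_eq_div, le_div_iff₀ hβ]; linarith
    have h3' : ‖p‖ ≤ (1 / β) * (‖f‖ + M * ((1 / α) * ‖f‖)) := by
      refine h2'.trans (mul_le_mul_of_nonneg_left ?_ (by positivity))
      have := mul_le_mul_of_nonneg_left h1' hM.le
      linarith
    calc ‖u‖ + ‖p‖ ≤ (1 / α) * ‖f‖ + (1 / β) * (‖f‖ + M * ((1 / α) * ‖f‖)) := by linarith
      _ = C * ‖f‖ := by rw [hC]; ring
  -- continuous bilinear forms
  let A : V →L[ℝ] V →L[ℝ] ℝ := LinearMap.mkContinuous₂ a M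
    (fun u v => by rw [Real.norm_eq_abs]; exact hconta u v)
  let Bc : V →L[ℝ] Q →L[ℝ] ℝ := LinearMap.mkContinuous₂ b Mb
    (fun v q => by rw [Real.norm_eq_abs]; exact hcontb v q)
  have hA : ∀ u v, A u v = a u v := fun u v => rfl
  have hB : ∀ v q, Bc v q = b v q := fun v q => rfl
  -- the Riesz representative of b (·, q)
  let t : Q → V := fun q => (InnerProductSpace.toDual ℝ V).symm (Bc.flip q)
  have ht : ∀ q v, ⟪t q, v⟫ = b v q := fun q v =>
    InnerProductSpace.toDual_symm_apply
  have htsub : ∀ q₁ q₂, t (q₁ - q₂) = t q₁ - t q₂ := by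
    intro q₁ q₂
    refine ext_inner_right ℝ fun v => ?_
    rw [ht, inner_sub_left, ht, ht, map_sub]
  have hlow : ∀ q, β * ‖q‖ ≤ ‖t q‖ := by
    intro q
    refine (hinfsup q).trans (ciSup_le fun v => ?_)
    rcases eq_or_ne v 0 with rfl | hv
    · simp
    · rw [div_le_iff₀ (norm_pos_iff.mpr hv)]
      rw [← ht q v]
      exact real_inner_le_norm _ _
  -- t has closed range
  have hanti : AntilipschitzWith (Real.toNNReal β⁻¹) t := by
    refine AntilipschitzWith.of_le_mul_dist fun x y => ?_
    rw [dist_eq_norm, dist_eq_norm, ← htsub]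
    rw [Real.coe_toNNReal _ (inv_pos.mpr hβ).le]
    have h := hlow (x - y)
    calc ‖x - y‖ = β⁻¹ * (β * ‖x - y‖) := by field_simp
      _ ≤ β⁻¹ * ‖t (x - y)‖ :=
        mul_le_mul_of_nonneg_left h (inv_pos.mpr hβ).le
  have hlip : LipschitzWith ‖Bc.flip‖₊ t := by
    refine LipschitzWith.of_dist_le_mul fun x y => ?_
    rw [dist_eq_norm, dist_eq_norm, ← htsub]
    have : ‖t (x - y)‖ = ‖Bc.flip (x - y)‖ :=
      LinearIsometryEquiv.norm_map _ _
    rw [this]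
    exact Bc.flip.le_opNorm _
  have hclosed_range : IsClosed (Set.range t) :=
    hanti.isClosed_range hlip.uniformContinuous
  -- range of t as a submodule
  let R : Submodule ℝ V :=
    { carrier := Set.range t
      zero_mem' := ⟨0, ext_inner_right ℝ fun v => by simp [ht]⟩
      add_mem' := by
        rintro _ _ ⟨q₁, rfl⟩ ⟨q₂, rfl⟩
        exact ⟨q₁ + q₂, ext_inner_right ℝ fun v => by
          rw [ht, inner_add_left, ht, ht, map_add]⟩
      smul_mem' := by
        rintro c _ ⟨q, rfl⟩
        exact ⟨c • q, ext_inner_right ℝ fun v => by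
          rw [ht, real_inner_smul_left, ht, map_smul, smul_eq_mul]⟩ }
  have hRclosed : IsClosed (R : Set V) := hclosed_range
  haveI : CompleteSpace R := hRclosed.completeSpace_coe
  -- the kernel of b
  let Z : Submodule ℝ V := ⨅ q : Q, LinearMap.ker (Bc.flip q : V →ₗ[ℝ] ℝ)
  have hZmem : ∀ v : V, v ∈ Z ↔ ∀ q, b v q = 0 := by
    intro v
    simp only [Z, Submodule.mem_iInf, LinearMap.mem_ker]
    rfl
  have hZclosed : IsClosed (Z : Set V) := by
    rw [Submodule.coe_iInf]
    exact isClosed_iInter fun q => ContinuousLinearMap.isClosed_ker (Bc.flip q)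
  haveI : CompleteSpace Z := hZclosed.completeSpace_coe
  -- Rᗮ = Z, hence Zᗮ = R
  have hRorth : Rᗮ = Z := by
    ext v
    rw [Submodule.mem_orthogonal, hZmem]
    constructor
    · intro h q
      rw [← ht q v]
      exact h (t q) ⟨q, rfl⟩
    · rintro h _ ⟨q, rfl⟩
      rw [ht]
      exact h q
  have hZorth : Zᗮ = R := by rw [← hRorth, Submodule.orthogonal_orthogonal]
  -- Lax-Milgram on Z
  let A' : Z →L[ℝ] Z →L[ℝ] ℝ := A.bilinearComp Z.subtypeL Z.subtypeL
  have hcoerc : IsCoercive A' := by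
    refine ⟨α, hα, fun z => ?_⟩
    have : ‖z‖ = ‖(z : V)‖ := rfl
    rw [this, mul_assoc, ← sq]
    exact hcoer (z : V)
  -- existence
  have exi : ∀ f : V →L[ℝ] ℝ, ∃ up : V × Q,
      (∀ v, a up.1 v + b v up.2 = f v) ∧ (∀ q, b up.1 q = 0) := by
    intro f
    let g : Z →L[ℝ] ℝ := f.comp Z.subtypeL
    let u₀ : Z := hcoerc.continuousLinearEquivOfBilin.symm
      ((InnerProductSpace.toDual ℝ Z).symm g)
    have hu₀ : ∀ z : Z, a (u₀ : V) (z : V) = f (z : V) := by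
      intro z
      have h1 : A' u₀ z = ⟪hcoerc.continuousLinearEquivOfBilin u₀, z⟫ :=
        (hcoerc.continuousLinearEquivOfBilin_apply u₀ z).symm
      have h2 : hcoerc.continuousLinearEquivOfBilin u₀ =
          (InnerProductSpace.toDual ℝ Z).symm g :=
        hcoerc.continuousLinearEquivOfBilin.apply_symm_apply _
      have h3 : A' u₀ z = g z := by
        rw [h1, h2, InnerProductSpace.toDual_symm_apply]
      exact h3
    let g' : V →L[ℝ] ℝ := f - A (u₀ : V)
    let w : V := (InnerProductSpace.toDual ℝ V).symm g'
    have hw : ∀ v : V, ⟪w, v⟫ = f v - a (u₀ : V) v := by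
      intro v
      rw [InnerProductSpace.toDual_symm_apply]
      simp only [g', ContinuousLinearMap.sub_apply]
      rfl
    have hwZ : w ∈ Zᗮ := by
      rw [Submodule.mem_orthogonal]
      intro z hz
      rw [real_inner_comm, hw]
      rw [hu₀ ⟨z, hz⟩]
      ring
    rw [hZorth] at hwZ
    obtain ⟨p, hp⟩ := hwZ
    refine ⟨((u₀ : V), p), fun v => ?_, fun q => ?_⟩
    · have : b v p = ⟪w, v⟫ := by rw [← hp]; exact (ht p v).symm
      rw [this, hw]; ring
    · exact (hZmem _).mp u₀.2 q
  refine ⟨C, hCpos, fun f => ⟨?_, key f⟩⟩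
  obtain ⟨up, hup⟩ := exi f
  refine ⟨up, hup, fun y hy => ?_⟩
  have hdiff : (∀ v, a (y.1 - up.1) v + b v (y.2 - up.2) = (0 : V →L[ℝ] ℝ) v) ∧
      (∀ q, b (y.1 - up.1) q = 0) := by
    constructor
    · intro v
      have := hy.1 v
      have := hup.1 v
      simp only [map_sub, LinearMap.sub_apply, ContinuousLinearMap.zero_apply]
      linarith
    · intro q
      have := hy.2 q
      have := hup.2 q
      simp only [map_sub, LinearMap.sub_apply]
      linarith
  have := key 0 (y.1 - up.1, y.2 - up.2) hdiff
  rw [norm_zero, mul_zero] at this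
  have h1 : y.1 = up.1 := by
    have := norm_nonneg (y.1 - up.1)
    have := norm_nonneg (y.2 - up.2)
    have : ‖y.1 - up.1‖ = 0 := by linarith
    rwa [norm_eq_zero, sub_eq_zero] at this
  have h2 : y.2 = up.2 := by
    have := norm_nonneg (y.1 - up.1)
    have := norm_nonneg (y.2 - up.2)
    have : ‖y.2 - up.2‖ = 0 := by linarith
    rwa [norm_eq_zero, sub_eq_zero] at this
  exact Prod.ext h1 h2
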